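/- Let x, y ∈ {0,1}^n. For 1 ≤ i < j ≤ n define the integer F_{ij}(x,y) = x_i·y_j + y_i·x_j − 2·y_i·y_j (with the bits treated as integers 0 or 1). Set b = #{i : x_i = 0 and y_i = 1}, c = #{i : x_i = 1 and y_i = 0}, d = #{i : x_i = 1 and y_i = 1}. Then the number of pairs (i,j) with i < j and F_{ij}(x,y) ≠ 0 equals C(b,2) + bc + bd + cd. -/

import Mathlib

open Finset

private lemma key_pt (n : ℕ) (x y : Fin n → ZMod 2) (i j : Fin n) :
    (((x i).val * (y j).val + (y i).val * (x j).val - 2 * ((y i).val) * (y j).val : ℤ) ≠ 0)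
    ↔ ((x i = 0 ∧ y i = 1) ∧ ((x j = 1 ∧ y j = 0) ∨ ((x j = 1 ∧ y j = 1) ∨ (x j = 0 ∧ y j = 1))))
      ∨ (((x i = 1 ∧ y i = 0) ∨ (x i = 1 ∧ y i = 1)) ∧ (x j = 0 ∧ y j = 1))
      ∨ ((x i = 1 ∧ y i = 0) ∧ (x j = 1 ∧ y j = 1))
      ∨ ((x i = 1 ∧ y i = 1) ∧ (x j = 1 ∧ y j = 0)) := by
  have h : ∀ a : ZMod 2, a = 0 ∨ a = 1 := by decide
  rcases h (x i) with h1 | h1 <;> rcases h (y i) with h2 | h2 <;>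
    rcases h (x j) with h3 | h3 <;> rcases h (y j) with h4 | h4 <;>
    simp [h1, h2, h3, h4] <;> decide

private lemma key_diag (n : ℕ) (x y : Fin n → ZMod 2) (i : Fin n) :
    (((x i).val * (y i).val + (y i).val * (x i).val - 2 * ((y i).val) * (y i).val : ℤ) ≠ 0)
    ↔ (x i = 0 ∧ y i = 1) := by
  have h : ∀ a : ZMod 2, a = 0 ∨ a = 1 := by decide
  rcases h (x i) with h1 | h1 <;> rcases h (y i) with h2 | h2 <;>
    simp [h1, h2] <;> decide

private lemma card_filter_prod' {n : ℕ} (p q : Fin n → Prop) [DecidablePred p] [DecidablePred q] :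
    ((univ : Finset (Fin n × Fin n)).filter (fun z => p z.1 ∧ q z.2)).card
      = (univ.filter p).card * (univ.filter q).card := by
  rw [← Finset.univ_product_univ, Finset.filter_product, Finset.card_product]

private lemma disj_filter {α : Type*} [Fintype α] [DecidableEq α] (p q : α → Prop)
    [DecidablePred p] [DecidablePred q] (h : ∀ i, p i → q i → False) :
    Disjoint ((univ : Finset α).filter p) ((univ : Finset α).filter q) := by
  rw [Finset.disjoint_left]
  intro a ha hb
  simp only [mem_filter] at ha hb
  exact h a ha.2 hb.2

private lemma card_swap' {n : ℕ} (P : Fin n → Fin n → Prop) [∀ i j, Decidable (P i j)]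
    (hP : ∀ i j, P i j ↔ P j i) :
    ((univ : Finset (Fin n × Fin n)).filter (fun z => z.1 < z.2 ∧ P z.1 z.2)).card
    = ((univ : Finset (Fin n × Fin n)).filter (fun z => z.2 < z.1 ∧ P z.1 z.2)).card := by
  refine Finset.card_nbij' (fun z => (z.2, z.1)) (fun z => (z.2, z.1)) ?_ ?_ ?_ ?_
  · intro a ha; simp only [mem_coe, mem_filter, mem_univ, true_and] at ha ⊢
    exact ⟨ha.1, (hP a.1 a.2).mp ha.2⟩
  · intro a ha; simp only [mem_coe, mem_filter, mem_univ, true_and] at ha ⊢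
    exact ⟨ha.1, (hP a.1 a.2).mp ha.2⟩
  · intro a _; rfl
  · intro a _; rfl

private lemma card_diag' {n : ℕ} (P : Fin n → Fin n → Prop) [∀ i j, Decidable (P i j)] :
    ((univ : Finset (Fin n × Fin n)).filter (fun z => z.1 = z.2 ∧ P z.1 z.2)).card
    = ((univ : Finset (Fin n)).filter (fun i => P i i)).card := by
  refine Finset.card_nbij' (fun z => z.1) (fun i => (i, i)) ?_ ?_ ?_ ?_
  · intro a ha; simp only [mem_coe, mem_filter, mem_univ, true_and] at ha ⊢
    rw [← ha.1] at ha; exact ha.2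
  · intro a ha; simp only [mem_coe, mem_filter, mem_univ, true_and] at ha ⊢
    exact ha
  · intro a ha; simp only [mem_coe, mem_filter, mem_univ, true_and] at ha
    exact Prod.ext rfl ha.1
  · intro a _; rfl

private lemma partition' {n : ℕ} (P : Fin n → Fin n → Prop) [∀ i j, Decidable (P i j)] :
    ((univ : Finset (Fin n × Fin n)).filter (fun z => P z.1 z.2)).card
    = ((univ : Finset (Fin n × Fin n)).filter (fun z => z.1 < z.2 ∧ P z.1 z.2)).card
      + ((univ : Finset (Fin n × Fin n)).filter (fun z => z.2 < z.1 ∧ P z.1 z.2)).card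
      + ((univ : Finset (Fin n × Fin n)).filter (fun z => z.1 = z.2 ∧ P z.1 z.2)).card := by
  rw [← Finset.card_union_of_disjoint, ← Finset.card_union_of_disjoint]
  · congr 1
    ext z
    simp only [mem_union, mem_filter, mem_univ, true_and]
    constructor
    · intro h
      rcases lt_trichotomy z.1 z.2 with hlt | heq | hgt
      · exact Or.inl (Or.inl ⟨hlt, h⟩)
      · exact Or.inr ⟨heq, h⟩
      · exact Or.inl (Or.inr ⟨hgt, h⟩)
    · rintro ((⟨_, h⟩ | ⟨_, h⟩) | ⟨_, h⟩) <;> exact h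
  · rw [Finset.disjoint_left]
    rintro a ha hb
    simp only [mem_union, mem_filter, mem_univ, true_and] at ha hb
    rcases ha with ⟨h, _⟩ | ⟨h, _⟩ <;> exact absurd hb.1 (by omega)
  · rw [Finset.disjoint_left]
    rintro a ha hb
    simp only [mem_filter, mem_univ, true_and] at ha hb
    exact absurd hb.1 (by omega)

private lemma sq_choose (b : ℕ) : b * b = 2 * b.choose 2 + b := by
  rcases b with _ | m
  · simp
  · have hdvd : 2 ∣ (m + 1) * m := by
      rw [mul_comm]; exact (Nat.even_mul_succ_self m).two_dvd
    rw [Nat.choose_two_right]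
    have : (m + 1) - 1 = m := rfl
    rw [this, Nat.mul_div_cancel' hdvd]
    ring

/-- for bit strings `x, y ∈ {0,1}^n`, with
`F_{ij}(x,y) = x_i·y_j + y_i·x_j − 2·y_i·y_j` (bits as integers), the number of pairs
`i < j` with `F_{ij}(x,y) ≠ 0` equals `C(b,2) + bc + bd + cd`, where
`b = #{i : x_i = 0, y_i = 1}`, `c = #{i : x_i = 1, y_i = 0}`, `d = #{i : x_i = 1, y_i = 1}`. -/
theorem count_nonzero_F (n : ℕ) (x y : Fin n → ZMod 2) :
    ((Finset.univ : Finset (Fin n × Fin n)).filter (fun q => q.1 < q.2 ∧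
        ((x q.1).val * (y q.2).val + (y q.1).val * (x q.2).val
          - 2 * (y q.1).val * (y q.2).val : ℤ) ≠ 0)).card
      = ((Finset.univ.filter (fun i => x i = 0 ∧ y i = 1)).card).choose 2
        + (Finset.univ.filter (fun i => x i = 0 ∧ y i = 1)).card
            * (Finset.univ.filter (fun i => x i = 1 ∧ y i = 0)).card
        + (Finset.univ.filter (fun i => x i = 0 ∧ y i = 1)).card
            * (Finset.univ.filter (fun i => x i = 1 ∧ y i = 1)).card
        + (Finset.univ.filter (fun i => x i = 1 ∧ y i = 0)).card
            * (Finset.univ.filter (fun i => x i = 1 ∧ y i = 1)).card := by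
  set P : Fin n → Fin n → Prop := fun i j =>
    (((x i).val * (y j).val + (y i).val * (x j).val - 2 * (y i).val * (y j).val : ℤ) ≠ 0)
    with hPdef
  have hsym : ∀ i j, P i j ↔ P j i := by
    intro i j
    rw [hPdef]
    simp only
    constructor <;> (intro h heq; exact h (by linarith))
  set b := (Finset.univ.filter (fun i => x i = 0 ∧ y i = 1)).card with hb
  set c := (Finset.univ.filter (fun i => x i = 1 ∧ y i = 0)).card with hc
  set d := (Finset.univ.filter (fun i => x i = 1 ∧ y i = 1)).card with hd
  -- ordered count
  have hord : ((univ : Finset (Fin n × Fin n)).filter (fun z => P z.1 z.2)).card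
      = b * (c + (d + b)) + (c + d) * b + (c * d + d * c) := by
    have e1 : ((univ : Finset (Fin n × Fin n)).filter (fun z => P z.1 z.2))
        = (univ : Finset (Fin n × Fin n)).filter (fun z =>
          ((x z.1 = 0 ∧ y z.1 = 1) ∧ ((x z.2 = 1 ∧ y z.2 = 0) ∨ ((x z.2 = 1 ∧ y z.2 = 1) ∨ (x z.2 = 0 ∧ y z.2 = 1))))
          ∨ ((((x z.1 = 1 ∧ y z.1 = 0) ∨ (x z.1 = 1 ∧ y z.1 = 1)) ∧ (x z.2 = 0 ∧ y z.2 = 1))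
          ∨ (((x z.1 = 1 ∧ y z.1 = 0) ∧ (x z.2 = 1 ∧ y z.2 = 1))
          ∨ ((x z.1 = 1 ∧ y z.1 = 1) ∧ (x z.2 = 1 ∧ y z.2 = 0))))) :=
      Finset.filter_congr (fun z _ => key_pt n x y z.1 z.2)
    rw [e1, Finset.filter_or, Finset.filter_or, Finset.filter_or,
      Finset.card_union_of_disjoint, Finset.card_union_of_disjoint,
      Finset.card_union_of_disjoint]
    · rw [card_filter_prod' (fun i => x i = 0 ∧ y i = 1)
          (fun j => (x j = 1 ∧ y j = 0) ∨ ((x j = 1 ∧ y j = 1) ∨ (x j = 0 ∧ y j = 1))),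
        card_filter_prod' (fun i => (x i = 1 ∧ y i = 0) ∨ (x i = 1 ∧ y i = 1))
          (fun j => x j = 0 ∧ y j = 1),
        card_filter_prod' (fun i => x i = 1 ∧ y i = 0) (fun j => x j = 1 ∧ y j = 1),
        card_filter_prod' (fun i => x i = 1 ∧ y i = 1) (fun j => x j = 1 ∧ y j = 0)]
      have hU : (univ.filter (fun j : Fin n =>
          (x j = 1 ∧ y j = 0) ∨ ((x j = 1 ∧ y j = 1) ∨ (x j = 0 ∧ y j = 1)))).card
          = c + (d + b) := by
        rw [Finset.filter_or, Finset.filter_or, Finset.card_union_of_disjoint,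
          Finset.card_union_of_disjoint]
        · exact disj_filter _ _ (by
          intro i h1 h2
          revert h1 h2
          generalize x i = a1; generalize y i = a2
          revert a1 a2; decide)
        · refine Finset.disjoint_union_right.mpr ⟨?_, ?_⟩ <;>
            exact disj_filter _ _ (by
          intro i h1 h2
          revert h1 h2
          generalize x i = a1; generalize y i = a2
          revert a1 a2; decide)
      have hCD : (univ.filter (fun i : Fin n =>
          (x i = 1 ∧ y i = 0) ∨ (x i = 1 ∧ y i = 1))).card = c + d := by
        rw [Finset.filter_or, Finset.card_union_of_disjoint]
        exact disj_filter _ _ (by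
          intro i h1 h2
          revert h1 h2
          generalize x i = a1; generalize y i = a2
          revert a1 a2; decide)
      rw [hU, hCD]
      ring
    · exact disj_filter _ _ (by
          intro z h1 h2
          revert h1 h2
          generalize x z.1 = a1; generalize y z.1 = a2
          generalize x z.2 = a3; generalize y z.2 = a4
          revert a1 a2 a3 a4; decide)
    · refine Finset.disjoint_union_right.mpr ⟨?_, ?_⟩
      · exact disj_filter _ _ (by
          intro z h1 h2
          revert h1 h2
          generalize x z.1 = a1; generalize y z.1 = a2
          generalize x z.2 = a3; generalize y z.2 = a4
          revert a1 a2 a3 a4; decide)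
      · exact disj_filter _ _ (by
          intro z h1 h2
          revert h1 h2
          generalize x z.1 = a1; generalize y z.1 = a2
          generalize x z.2 = a3; generalize y z.2 = a4
          revert a1 a2 a3 a4; decide)
    · refine Finset.disjoint_union_right.mpr ⟨?_, Finset.disjoint_union_right.mpr ⟨?_, ?_⟩⟩
      · exact disj_filter _ _ (by
          intro z h1 h2
          revert h1 h2
          generalize x z.1 = a1; generalize y z.1 = a2
          generalize x z.2 = a3; generalize y z.2 = a4
          revert a1 a2 a3 a4; decide)
      · exact disj_filter _ _ (by
          intro z h1 h2
          revert h1 h2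
          generalize x z.1 = a1; generalize y z.1 = a2
          generalize x z.2 = a3; generalize y z.2 = a4
          revert a1 a2 a3 a4; decide)
      · exact disj_filter _ _ (by
          intro z h1 h2
          revert h1 h2
          generalize x z.1 = a1; generalize y z.1 = a2
          generalize x z.2 = a3; generalize y z.2 = a4
          revert a1 a2 a3 a4; decide)
  -- diagonal count
  have hdiag : ((univ : Finset (Fin n × Fin n)).filter (fun z => z.1 = z.2 ∧ P z.1 z.2)).card
      = b := by
    rw [card_diag']
    have e2 : ((univ : Finset (Fin n)).filter (fun i => P i i))
        = univ.filter (fun i => x i = 0 ∧ y i = 1) :=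
      Finset.filter_congr (fun i _ => key_diag n x y i)
    rw [e2]
  have hswap := card_swap' P hsym
  have hpart := partition' P
  set S := ((univ : Finset (Fin n × Fin n)).filter (fun z => z.1 < z.2 ∧ P z.1 z.2)).card with hS
  rw [hord, ← hswap, hdiag] at hpart
  have h2 : 2 * S = 2 * (b.choose 2 + b * c + b * d + c * d) := by
    have hsq := sq_choose b
    have e : S + S + b = (2 * b.choose 2 + b) + 2 * (b * c) + 2 * (b * d) + 2 * (c * d) := by
      rw [← hpart, ← hsq]; ring
    omega
  have h3 : S = b.choose 2 + b * c + b * d + c * d :=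
    Nat.eq_of_mul_eq_mul_left (by norm_num) h2
  exact h3
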